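/- Let h : [0,∞) → ℝ be continuous and strictly positive, and for s ≥ 0 and t > 0 define GM(t,s) = exp((1/t)∫ₛ^{s+t} ln h(u) du). Then h is monotone non-decreasing (respectively non-increasing) on [0,∞) if and only if for every s ≥ 0 the map t ↦ GM(t,s) is monotone non-decreasing (respectively non-increasing) on (0,∞), i.e., GM(t₂,s) ≥ GM(t₁,s) (respectively ≤) whenever t₂ ≥ t₁ > 0. -/

import Mathlib

open Set MeasureTheory intervalIntegral

lemma intg_aux {g : ℝ → ℝ} (hg : ContinuousOn g (Set.Ici 0)) {a b : ℝ}
    (ha : 0 ≤ a) (hab : a ≤ b) : IntervalIntegrable g volume a b := by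
  apply ContinuousOn.intervalIntegrable
  apply hg.mono
  rw [Set.uIcc_of_le hab]
  exact fun x hx => ha.trans hx.1

lemma avg_mono_iff {g : ℝ → ℝ} (hg : ContinuousOn g (Set.Ici 0)) :
    MonotoneOn g (Set.Ici 0) ↔
      ∀ s ≥ (0:ℝ), MonotoneOn (fun t => (1 / t) * ∫ u in s..(s + t), g u) (Set.Ioi 0) := by
  constructor
  · intro hmono s hs t1 ht1 t2 ht2 h12
    have ht1p : (0:ℝ) < t1 := ht1
    have ht2p : (0:ℝ) < t2 := ht2
    simp only
    set I1 := ∫ u in s..(s + t1), g u with hI1def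
    set I2 := ∫ u in (s + t1)..(s + t2), g u with hI2def
    have hadj : (∫ u in s..(s + t2), g u) = I1 + I2 :=
      (intervalIntegral.integral_add_adjacent_intervals
        (intg_aux hg hs (by linarith)) (intg_aux hg (by linarith) (by linarith))).symm
    have bound1 : I1 ≤ t1 * g (s + t1) := by
      have := intervalIntegral.integral_mono_on (by linarith : s ≤ s + t1)
        (intg_aux hg hs (by linarith)) (_root_.intervalIntegrable_const (c := g (s + t1)))
        (fun x hx => hmono (Set.mem_Ici.2 (hs.trans hx.1))
          (Set.mem_Ici.2 (by linarith)) hx.2)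
      simpa [smul_eq_mul] using this
    have bound2 : (t2 - t1) * g (s + t1) ≤ I2 := by
      have := intervalIntegral.integral_mono_on (by linarith : s + t1 ≤ s + t2)
        (_root_.intervalIntegrable_const (c := g (s + t1)))
        (intg_aux hg (by linarith) (by linarith))
        (fun x hx => hmono (Set.mem_Ici.2 (by linarith))
          (Set.mem_Ici.2 (by linarith [hx.1])) hx.1)
      have h' : (s + t2 - (s + t1)) * g (s + t1) ≤ I2 := by simpa [smul_eq_mul] using this
      linarith [h']
    rw [hadj]
    have key : I1 / t1 ≤ (I1 + I2) / t2 := by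
      rw [div_le_div_iff₀ ht1p ht2p]
      nlinarith [mul_le_mul_of_nonneg_right bound1 (sub_nonneg.2 h12),
        mul_le_mul_of_nonneg_left bound2 ht1p.le]
    calc 1 / t1 * I1 = I1 / t1 := by ring
      _ ≤ (I1 + I2) / t2 := key
      _ = 1 / t2 * (I1 + I2) := by ring
  · intro hA
    have P : ∀ a b : ℝ, 0 ≤ a → a < b → (∫ u in a..b, g u) ≤ (b - a) * g b := by
      intro a b ha hab
      have hb0 : (0:ℝ) < b := lt_of_le_of_lt ha hab
      have hcb : ContinuousAt g b := hg.continuousAt (Ici_mem_nhds hb0)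
      have key : ∀ ε > (0:ℝ), (∫ u in a..b, g u) ≤ (b - a) * g b + (b - a) * ε := by
        intro ε hε
        obtain ⟨δ, hδ, hδ'⟩ := Metric.continuousAt_iff.mp hcb ε hε
        set b' := b + δ / 2 with hb'def
        have hbb' : b < b' := by rw [hb'def]; linarith
        have hk := hA a ha (Set.mem_Ioi.2 (by linarith : (0:ℝ) < b - a))
          (Set.mem_Ioi.2 (by linarith : (0:ℝ) < b' - a)) (by linarith)
        simp only at hk
        rw [show a + (b - a) = b by ring, show a + (b' - a) = b' by ring] at hk
        set I := ∫ u in a..b, g u with hIdef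
        set J := ∫ u in b..b', g u with hJdef
        have hadj : (∫ u in a..b', g u) = I + J :=
          (intervalIntegral.integral_add_adjacent_intervals
            (intg_aux hg ha hab.le) (intg_aux hg hb0.le hbb'.le)).symm
        rw [hadj] at hk
        have hk' : I * (b' - a) ≤ (I + J) * (b - a) := by
          rw [show 1 / (b - a) * I = I / (b - a) by ring,
            show 1 / (b' - a) * (I + J) = (I + J) / (b' - a) by ring,
            div_le_div_iff₀ (by linarith) (by linarith)] at hk
          exact hk
        have hJ : J ≤ (b' - b) * (g b + ε) := by
          have hle : ∀ x ∈ Set.Icc b b', g x ≤ g b + ε := by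
            intro x hx
            have hd : dist x b < δ := by
              rw [Real.dist_eq, abs_lt]
              constructor
              · linarith [hx.1]
              · have := hx.2; rw [hb'def] at this; linarith
            have := hδ' hd
            rw [Real.dist_eq, abs_lt] at this
            linarith [this.2]
          have hmono' := intervalIntegral.integral_mono_on hbb'.le
            (intg_aux hg hb0.le hbb'.le) (_root_.intervalIntegrable_const (c := g b + ε)) hle
          have h2 : J ≤ (b' - b) * g b + (b' - b) * ε := by
            simpa [smul_eq_mul] using hmono'
          nlinarith [h2]
        have h3 : (b' - b) * I ≤ (b - a) * J := by nlinarith [hk']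
        have h4 : (b' - b) * I ≤ (b' - b) * ((b - a) * (g b + ε)) := by
          nlinarith [mul_le_mul_of_nonneg_left hJ (by linarith : (0:ℝ) ≤ b - a)]
        have h5 : I ≤ (b - a) * (g b + ε) :=
          le_of_mul_le_mul_left h4 (by linarith : (0:ℝ) < b' - b)
        nlinarith [h5]
      refine le_of_forall_pos_le_add ?_
      intro ε hε
      have hba : (0:ℝ) < b - a := by linarith
      have := key (ε / (b - a)) (by positivity)
      have heq : (b - a) * (ε / (b - a)) = ε := by field_simp
      linarith [this, heq.le, heq.ge]
    intro x hx y hy hxy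
    by_contra hcon
    push_neg at hcon
    have hx0 : (0:ℝ) ≤ x := hx
    have hxy' : x < y := by
      rcases lt_or_eq_of_le hxy with h | h
      · exact h
      · rw [h] at hcon; exact absurd hcon (lt_irrefl _)
    set S := {z ∈ Set.Icc x y | g z ≤ g y} with hSdef
    have hSne : S.Nonempty := ⟨y, ⟨⟨hxy, le_refl y⟩, le_refl _⟩⟩
    have hSbdd : BddBelow S := ⟨x, fun z hz => hz.1.1⟩
    set c := sInf S with hcdef
    have hcIcc : c ∈ Set.Icc x y :=
      ⟨le_csInf hSne (fun z hz => hz.1.1), csInf_le hSbdd ⟨⟨hxy, le_refl y⟩, le_refl _⟩⟩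
    have hc0 : (0:ℝ) ≤ c := hx0.trans hcIcc.1
    have hgc : g c ≤ g y := by
      by_contra hgc
      push_neg at hgc
      have hcw : ContinuousWithinAt g (Set.Ici 0) c := hg c hc0
      have hev : {z | g z ∈ Set.Ioi (g y)} ∈ nhdsWithin c (Set.Ici 0) :=
        hcw (Ioi_mem_nhds hgc)
      rw [Metric.mem_nhdsWithin_iff] at hev
      obtain ⟨δ, hδpos, hball⟩ := hev
      obtain ⟨z, hzS, hzlt⟩ := Real.lt_sInf_add_pos hSne hδpos
      have hz1 : c ≤ z := csInf_le hSbdd hzS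
      have hzmem : z ∈ Metric.ball c δ ∩ Set.Ici 0 := by
        constructor
        · rw [Metric.mem_ball, Real.dist_eq, abs_lt]
          constructor <;> [linarith; linarith]
        · exact Set.mem_Ici.2 (hx0.trans hzS.1.1)
      have := hball hzmem
      exact absurd hzS.2 (not_le.2 this)
    have hxc : x < c := by
      rcases lt_or_eq_of_le hcIcc.1 with h | h
      · exact h
      · exfalso; rw [← h] at hgc; linarith
    have hpos_on : ∀ z ∈ Set.Ioo x c, 0 < g z - g c := by
      intro z hz
      have hznS : z ∉ S := fun hzS => absurd (csInf_le hSbdd hzS) (not_le.2 hz.2)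
      have hzIcc : z ∈ Set.Icc x y := ⟨hz.1.le, hz.2.le.trans hcIcc.2⟩
      have hgz : ¬ g z ≤ g y := fun hle => hznS ⟨hzIcc, hle⟩
      push_neg at hgz
      linarith
    have hint : IntervalIntegrable (fun z => g z - g c) volume x c :=
      (intg_aux hg hx0 hxc.le).sub (_root_.intervalIntegrable_const (c := g c))
    have hposI := intervalIntegral.intervalIntegral_pos_of_pos_on hint hpos_on hxc
    have hsub : (∫ z in x..c, (g z - g c)) = (∫ z in x..c, g z) - (c - x) * g c := by
      rw [intervalIntegral.integral_sub (intg_aux hg hx0 hxc.le)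
        (_root_.intervalIntegrable_const (c := g c))]
      simp [smul_eq_mul]
    rw [hsub] at hposI
    have hP := P x c hx0 hxc
    linarith

lemma exp_mono_iff {f : ℝ → ℝ} {S : Set ℝ} :
    MonotoneOn (fun t => Real.exp (f t)) S ↔ MonotoneOn f S := by
  constructor <;> intro H a ha b hb hab
  · exact Real.exp_le_exp.mp (H ha hb hab)
  · exact Real.exp_le_exp.mpr (H ha hb hab)

lemma exp_anti_iff {f : ℝ → ℝ} {S : Set ℝ} :
    AntitoneOn (fun t => Real.exp (f t)) S ↔ AntitoneOn f S := by
  constructor <;> intro H a ha b hb hab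
  · exact Real.exp_le_exp.mp (H ha hb hab)
  · exact Real.exp_le_exp.mpr (H ha hb hab)

lemma neg_mono_iff {f : ℝ → ℝ} {S : Set ℝ} :
    MonotoneOn (fun t => -(f t)) S ↔ AntitoneOn f S := by
  constructor <;> intro H a ha b hb hab <;> have := H ha hb hab <;>
    simp only [neg_le_neg_iff] at this ⊢ <;> linarith

theorem IFR_iff_GM_monotone_in_t
    (h : ℝ → ℝ) (hc : ContinuousOn h (Set.Ici 0))
    (hpos : ∀ u ∈ Set.Ici (0 : ℝ), 0 < h u) :
    (MonotoneOn h (Set.Ici 0) ↔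
      ∀ s ≥ (0:ℝ),
        MonotoneOn
          (fun t => Real.exp ((1 / t) * ∫ u in s..(s + t), Real.log (h u)))
          (Set.Ioi 0)) ∧
    (AntitoneOn h (Set.Ici 0) ↔
      ∀ s ≥ (0:ℝ),
        AntitoneOn
          (fun t => Real.exp ((1 / t) * ∫ u in s..(s + t), Real.log (h u)))
          (Set.Ioi 0)) := by
  set g : ℝ → ℝ := fun u => Real.log (h u) with hgdef
  have hgcont : ContinuousOn g (Set.Ici 0) :=
    hc.log (fun u hu => (hpos u hu).ne')
  have hlogiff : MonotoneOn h (Set.Ici 0) ↔ MonotoneOn g (Set.Ici 0) := by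
    constructor <;> intro H a ha b hb hab
    · exact (Real.log_le_log_iff (hpos a ha) (hpos b hb)).mpr (H ha hb hab)
    · exact (Real.log_le_log_iff (hpos a ha) (hpos b hb)).mp (H ha hb hab)
  have hlogiff' : AntitoneOn h (Set.Ici 0) ↔ AntitoneOn g (Set.Ici 0) := by
    constructor <;> intro H a ha b hb hab
    · exact (Real.log_le_log_iff (hpos b hb) (hpos a ha)).mpr (H ha hb hab)
    · exact (Real.log_le_log_iff (hpos b hb) (hpos a ha)).mp (H ha hb hab)
  constructor
  · rw [hlogiff, avg_mono_iff hgcont]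
    exact forall₂_congr (fun s hs => exp_mono_iff.symm)
  · rw [hlogiff']
    have hneg : AntitoneOn g (Set.Ici 0) ↔ MonotoneOn (fun u => -(g u)) (Set.Ici 0) :=
      neg_mono_iff.symm
    rw [hneg, avg_mono_iff (g := fun u => -(g u)) hgcont.neg]
    refine forall₂_congr (fun s hs => ?_)
    have hfeq : (fun t => (1 / t) * ∫ u in s..(s + t), -(g u))
        = fun t => -((1 / t) * ∫ u in s..(s + t), g u) := by
      funext t
      rw [intervalIntegral.integral_neg]
      ring
    rw [hfeq, neg_mono_iff]
    exact exp_anti_iff.symm
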